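/- For all n ≥ 1, Σ_{σ ∈ Av_n(213,321)} q^{maj σ} t^{des σ} = 1 + t·Σ_{k=1}^{n-1} k q^k. In particular #Av_n(213,321) = 1 + binomial(n,2). -/

import Mathlib

open scoped Classical

/-- `σ` contains the pattern `π`. -/
def permContains {n k : ℕ} (σ : Equiv.Perm (Fin n)) (π : Equiv.Perm (Fin k)) : Prop :=
  ∃ f : Fin k → Fin n, StrictMono f ∧ ∀ i j : Fin k, π i < π j ↔ σ (f i) < σ (f j)

/-- `σ` avoids the pattern `π`. -/
def permAvoids {n k : ℕ} (σ : Equiv.Perm (Fin n)) (π : Equiv.Perm (Fin k)) : Prop :=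
  ¬ permContains σ π

def p123 : Equiv.Perm (Fin 3) := 1
def p132 : Equiv.Perm (Fin 3) := Equiv.swap 1 2
def p213 : Equiv.Perm (Fin 3) := Equiv.swap 0 1
def p231 : Equiv.Perm (Fin 3) := finRotate 3
def p312 : Equiv.Perm (Fin 3) := (finRotate 3)⁻¹
def p321 : Equiv.Perm (Fin 3) := Equiv.swap 0 2

/-- Descent set of a permutation, as a set of (1-based) positions `i` with `a_i > a_{i+1}`. -/
def desSet {n : ℕ} (σ : Equiv.Perm (Fin n)) : Finset ℕ :=
  (Finset.Ico 1 n).filter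
    (fun i => ∀ h : i < n, σ ⟨i, h⟩ < σ ⟨i - 1, Nat.lt_of_le_of_lt (Nat.sub_le i 1) h⟩)

/-- Major index: sum of descent positions. -/
def majIdx {n : ℕ} (σ : Equiv.Perm (Fin n)) : ℕ := ∑ i ∈ desSet σ, i

/-- Number of descents. -/
def desNum {n : ℕ} (σ : Equiv.Perm (Fin n)) : ℕ := (desSet σ).card

/-- Number of inversions. -/
def invNum {n : ℕ} (σ : Equiv.Perm (Fin n)) : ℕ :=
  ((Finset.univ : Finset (Fin n × Fin n)).filter (fun p => p.1 < p.2 ∧ σ p.2 < σ p.1)).card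

section Helpers
variable {n : ℕ} (σ : Equiv.Perm (Fin n))

lemma vec3_mono {p q r : Fin n} (hpq : p < q) (hqr : q < r) : StrictMono ![p, q, r] := by
  apply Fin.strictMono_iff_lt_succ.mpr
  intro i
  fin_cases i
  · exact hpq
  · exact hqr

lemma contains213 {p q r : Fin n} (hpq : p < q) (hqr : q < r)
    (h1 : σ q < σ p) (h2 : σ p < σ r) : permContains σ p213 := by
  have h3 : σ q < σ r := h1.trans h2
  refine ⟨![p, q, r], vec3_mono hpq hqr, ?_⟩
  intro i j
  fin_cases i <;> fin_cases j <;>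
    first
      | exact iff_of_true (by decide) h1
      | exact iff_of_true (by decide) h2
      | exact iff_of_true (by decide) h3
      | exact iff_of_false (by decide) (lt_irrefl _)
      | exact iff_of_false (by decide) (asymm h1)
      | exact iff_of_false (by decide) (asymm h2)
      | exact iff_of_false (by decide) (asymm h3)

lemma contains321 {p q r : Fin n} (hpq : p < q) (hqr : q < r)
    (h1 : σ q < σ p) (h2 : σ r < σ q) : permContains σ p321 := by
  have h3 : σ r < σ p := h2.trans h1
  refine ⟨![p, q, r], vec3_mono hpq hqr, ?_⟩
  intro i j
  fin_cases i <;> fin_cases j <;>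
    first
      | exact iff_of_true (by decide) h1
      | exact iff_of_true (by decide) h2
      | exact iff_of_true (by decide) h3
      | exact iff_of_false (by decide) (lt_irrefl _)
      | exact iff_of_false (by decide) (asymm h1)
      | exact iff_of_false (by decide) (asymm h2)
      | exact iff_of_false (by decide) (asymm h3)

lemma id_avoids213 : permAvoids (1 : Equiv.Perm (Fin n)) p213 := by
  rintro ⟨f, hf, hiff⟩
  have := (hiff 1 0).mp (by decide)
  simp only [Equiv.Perm.one_apply] at this
  exact absurd this (asymm (hf (show (0:Fin 3) < 1 by decide)))

lemma id_avoids321 : permAvoids (1 : Equiv.Perm (Fin n)) p321 := by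
  rintro ⟨f, hf, hiff⟩
  have := (hiff 1 0).mp (by decide)
  simp only [Equiv.Perm.one_apply] at this
  exact absurd this (asymm (hf (show (0:Fin 3) < 1 by decide)))

end Helpers

/-! ### The explicit family of permutations -/

def rf (n c k i : ℕ) : ℕ := if i < c then i else if i < k then i + (n - k) else i - (k - c)

section rfLemmas
variable {n c k : ℕ} (hck : c < k) (hkn : k < n)

lemma rf_lt (i : ℕ) (hi : i < n) : rf n c k i < n := by
  unfold rf; split_ifs with h1 h2 <;> omega

lemma rf_low {i : ℕ} (h : i < c) : rf n c k i = i := by unfold rf; split_ifs <;> omega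

lemma rf_mid {i : ℕ} (h1 : c ≤ i) (h2 : i < k) : rf n c k i = i + (n - k) := by
  unfold rf; split_ifs <;> omega

lemma rf_high {i : ℕ} (h : k ≤ i) : rf n c k i = i - (k - c) := by
  unfold rf; split_ifs <;> omega

include hck hkn in
lemma rf_inj {i j : ℕ} (hi : i < n) (hj : j < n) (h : rf n c k i = rf n c k j) : i = j := by
  unfold rf at h
  split_ifs at h <;> omega

include hck hkn in
lemma rf_desc_iff {i : ℕ} (h1 : 1 ≤ i) (h2 : i < n) :
    rf n c k i < rf n c k (i - 1) ↔ i = k := by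
  unfold rf
  split_ifs <;> omega

end rfLemmas

noncomputable def rho (n c k : ℕ) : Equiv.Perm (Fin n) :=
  if h : Function.Bijective (fun i : Fin n =>
      if hlt : rf n c k i.val < n then (⟨rf n c k i.val, hlt⟩ : Fin n) else i) then
    Equiv.ofBijective _ h
  else 1

section rhoLemmas
variable {n c k : ℕ} (hck : c < k) (hkn : k < n)

include hck hkn in
lemma rho_apply (i : Fin n) : ((rho n c k) i : ℕ) = rf n c k i.val := by
  have hbij : Function.Bijective (fun i : Fin n =>
      if hlt : rf n c k i.val < n then (⟨rf n c k i.val, hlt⟩ : Fin n) else i) := by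
    rw [Fintype.bijective_iff_injective_and_card]
    refine ⟨fun a b hab => ?_, rfl⟩
    simp only [dif_pos (rf_lt _ a.isLt), dif_pos (rf_lt _ b.isLt), Fin.mk.injEq] at hab
    exact Fin.ext (rf_inj hck hkn a.isLt b.isLt hab)
  rw [rho, dif_pos hbij]
  simp [Equiv.ofBijective, dif_pos (rf_lt _ i.isLt)]


include hck hkn in
lemma rho_desSet : desSet (rho n c k) = {k} := by
  ext i
  simp only [desSet, Finset.mem_filter, Finset.mem_Ico, Finset.mem_singleton]
  constructor
  · rintro ⟨⟨hi1, hi2⟩, hdesc⟩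
    have := hdesc hi2
    rw [Fin.lt_def, rho_apply hck hkn, rho_apply hck hkn] at this
    exact (rf_desc_iff hck hkn hi1 hi2).mp this
  · rintro rfl
    refine ⟨⟨by omega, hkn⟩, fun h => ?_⟩
    rw [Fin.lt_def, rho_apply hck hkn, rho_apply hck hkn]
    exact (rf_desc_iff hck hkn (by omega) hkn).mpr rfl

lemma desSet_one : desSet (1 : Equiv.Perm (Fin n)) = ∅ := by
  ext i
  simp only [desSet, Finset.mem_filter, Finset.mem_Ico, Finset.notMem_empty, iff_false,
    not_and, Equiv.Perm.one_apply]
  intro hmem; obtain ⟨hi, h⟩ := Finset.mem_filter.mp hmem; obtain ⟨hi1, hi2⟩ := Finset.mem_Ico.mp hi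
  have := h hi2
  rw [Fin.lt_def] at this
  simp at this
  omega

include hck hkn in
lemma rho_ne_one : rho n c k ≠ 1 := by
  intro h
  have : ((rho n c k) ⟨c, hck.trans hkn⟩ : ℕ) = c := by rw [h]; rfl
  rw [rho_apply hck hkn, rf_mid le_rfl hck] at this
  omega

include hck hkn in
lemma rho_avoids213 : permAvoids (rho n c k) p213 := by
  rintro ⟨f, hf, hiff⟩
  have h10 : (rho n c k) (f 1) < (rho n c k) (f 0) := (hiff 1 0).mp (by decide)
  have h02 : (rho n c k) (f 0) < (rho n c k) (f 2) := (hiff 0 2).mp (by decide)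
  have h01 : (f 0 : ℕ) < (f 1 : ℕ) := hf (show (0:Fin 3) < 1 by decide)
  have h12 : (f 1 : ℕ) < (f 2 : ℕ) := hf (show (1:Fin 3) < 2 by decide)
  rw [Fin.lt_def, rho_apply hck hkn, rho_apply hck hkn] at h10 h02
  -- from descent pair (f0, f1): c ≤ f0 < k ≤ f1
  have hb0 := (f 0).isLt; have hb1 := (f 1).isLt; have hb2 := (f 2).isLt
  unfold rf at h10 h02
  split_ifs at h10 h02 <;> omega

include hck hkn in
lemma rho_avoids321 : permAvoids (rho n c k) p321 := by
  rintro ⟨f, hf, hiff⟩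
  have h10 : (rho n c k) (f 1) < (rho n c k) (f 0) := (hiff 1 0).mp (by decide)
  have h21 : (rho n c k) (f 2) < (rho n c k) (f 1) := (hiff 2 1).mp (by decide)
  have h01 : (f 0 : ℕ) < (f 1 : ℕ) := hf (show (0:Fin 3) < 1 by decide)
  have h12 : (f 1 : ℕ) < (f 2 : ℕ) := hf (show (1:Fin 3) < 2 by decide)
  rw [Fin.lt_def, rho_apply hck hkn, rho_apply hck hkn] at h10 h21
  have hb0 := (f 0).isLt; have hb1 := (f 1).isLt; have hb2 := (f 2).isLt
  unfold rf at h10 h21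
  split_ifs at h10 h21 <;> omega

end rhoLemmas

lemma classify {n : ℕ} (σ : Equiv.Perm (Fin n)) (hA : permAvoids σ p213) (hB : permAvoids σ p321) :
    σ = 1 ∨ ∃ c k, c < k ∧ k < n ∧ σ = rho n c k := by
  classical
  by_cases hone : σ = 1
  · exact Or.inl hone
  right
  set w : ℕ → ℕ := fun i => if h : i < n then ((σ ⟨i, h⟩ : Fin n) : ℕ) else 0 with hw
  have wval : ∀ (i : ℕ) (h : i < n), w i = ((σ ⟨i, h⟩ : Fin n) : ℕ) := by
    intro i h; simp only [hw]; rw [dif_pos h]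
  have wlt : ∀ i, i < n → w i < n := by
    intro i h; rw [wval i h]; exact (σ ⟨i, h⟩).isLt
  have winj : ∀ i j, i < n → j < n → w i = w j → i = j := by
    intro i j hi hj hij
    rw [wval i hi, wval j hj] at hij
    have := σ.injective (Fin.ext hij)
    exact congrArg Fin.val this
  set pos : ℕ → ℕ := fun v => if h : v < n then ((σ.symm ⟨v, h⟩ : Fin n) : ℕ) else 0 with hposdef
  have hpos : ∀ v, v < n → pos v < n ∧ w (pos v) = v := by
    intro v hv
    have h1 : pos v = ((σ.symm ⟨v, hv⟩ : Fin n) : ℕ) := by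
      simp only [hposdef]; rw [dif_pos hv]
    have h2 : pos v < n := by rw [h1]; exact (σ.symm ⟨v, hv⟩).isLt
    refine ⟨h2, ?_⟩
    rw [wval _ h2]
    have : (⟨pos v, h2⟩ : Fin n) = σ.symm ⟨v, hv⟩ := Fin.ext h1
    rw [this, Equiv.apply_symm_apply]
  have wsur : ∀ v, v < n → ∃ q, q < n ∧ w q = v := fun v hv => ⟨pos v, hpos v hv⟩
  have P213 : ∀ p q r, p < q → q < r → r < n → w q < w p → w p < w r → False := by
    intro p q r h1 h2 h3 h4 h5
    have hp : p < n := by omega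
    have hq : q < n := by omega
    rw [wval q hq, wval p hp] at h4
    rw [wval p hp, wval r h3] at h5
    exact hA (contains213 σ (Fin.mk_lt_mk.mpr h1) (Fin.mk_lt_mk.mpr h2)
      (Fin.lt_def.mpr h4) (Fin.lt_def.mpr h5))
  have P321 : ∀ p q r, p < q → q < r → r < n → w q < w p → w r < w q → False := by
    intro p q r h1 h2 h3 h4 h5
    have hp : p < n := by omega
    have hq : q < n := by omega
    rw [wval q hq, wval p hp] at h4
    rw [wval r h3, wval q hq] at h5
    exact hB (contains321 σ (Fin.mk_lt_mk.mpr h1) (Fin.mk_lt_mk.mpr h2)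
      (Fin.lt_def.mpr h4) (Fin.lt_def.mpr h5))
  have hex : ∃ d, d + 1 < n ∧ w (d+1) < w d := by
    by_contra hcon
    push_neg at hcon
    apply hone
    have mono0 : ∀ j, j < n → ∀ i, i < j → w i < w j := by
      intro j
      induction j with
      | zero => intro _ i hi; omega
      | succ m ih =>
        intro hmn i him
        have step : w m < w (m+1) := by
          have hle := hcon m hmn
          have hne : w m ≠ w (m+1) := by
            intro hh
            have := winj _ _ (by omega) (by omega) hh
            omega
          omega
        rcases eq_or_lt_of_le (show i ≤ m by omega) with he|hl
        · subst he; exact step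
        · exact (ih (by omega) i hl).trans step
    have hmono : StrictMono σ := by
      intro a b hab
      have hm := mono0 b.val b.isLt a.val hab
      rw [wval _ a.isLt, wval _ b.isLt] at hm
      rw [Fin.lt_def]
      simpa using hm
    have hfun : (σ : Fin n → Fin n) = id :=
      (hmono.range_inj strictMono_id).mp
        (by rw [σ.surjective.range_eq]; exact (Set.range_id).symm)
    exact Equiv.ext (fun i => congrFun hfun i)
  obtain ⟨d, hdn, hdesc⟩ := hex
  have key2 : ∀ d1 d2, d1 + 1 < n → d2 + 1 < n → d1 < d2 →
      w (d1+1) < w d1 → w (d2+1) < w d2 → False := by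
    intro d1 d2 h1 h2 h12 hx hy
    rcases eq_or_lt_of_le (show d1 + 1 ≤ d2 by omega) with heq | hlt
    · subst heq
      exact P321 d1 (d1+1) (d1+1+1) (by omega) (by omega) (by omega) hx hy
    · rcases lt_trichotomy (w d1) (w d2) with hlt2 | heq2 | hgt2
      · exact P213 d1 (d1+1) d2 (by omega) hlt (by omega) hx hlt2
      · have := winj d1 d2 (by omega) (by omega) heq2; omega
      · exact P321 d1 d2 (d2+1) (by omega) (by omega) h2 hgt2 hy
  have huniq : ∀ e, e + 1 < n → w (e+1) < w e → e = d := by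
    intro e he hy
    rcases lt_trichotomy e d with h|h|h
    · exact (key2 e d he hdn h hy hdesc).elim
    · exact h
    · exact (key2 d e hdn he h hdesc hy).elim
  have hasc : ∀ i, i + 1 < n → i ≠ d → w i < w (i+1) := by
    intro i hi hne
    rcases lt_trichotomy (w i) (w (i+1)) with h|h|h
    · exact h
    · have := winj _ _ (by omega) (by omega) h; omega
    · exact absurd (huniq i hi h) hne
  have mono1 : ∀ i j, i < j → j ≤ d → w i < w j := by
    have main : ∀ j, j ≤ d → ∀ i, i < j → w i < w j := by
      intro j
      induction j with
      | zero => intro _ i hi; omega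
      | succ m ih =>
        intro hmd i him
        rcases eq_or_lt_of_le (show i ≤ m by omega) with he|hl
        · subst he; exact hasc i (by omega) (by omega)
        · exact (ih (by omega) i hl).trans (hasc m (by omega) (by omega))
    exact fun i j hij hj => main j hj i hij
  have mono2 : ∀ i j, d + 1 ≤ i → i < j → j < n → w i < w j := by
    have main : ∀ j, j < n → ∀ i, d + 1 ≤ i → i < j → w i < w j := by
      intro j
      induction j with
      | zero => intro _ i _ hi; omega
      | succ m ih =>
        intro hmn i hdi him
        rcases eq_or_lt_of_le (show i ≤ m by omega) with he|hl
        · subst he; exact hasc i (by omega) (by omega)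
        · exact (ih (by omega) i hdi hl).trans (hasc m (by omega) (by omega))
    exact fun i j h1 h2 h3 => main j h3 i h1 h2
  set c := w (d+1) with hc
  have hBm : ∀ m, d + 1 + m < n → w (d+1+m) = c + m := by
    intro m
    induction m with
    | zero => intro _; simpa using hc.symm
    | succ m ih =>
      intro hm
      have ihv := ih (by omega)
      have hasc' : w (d+1+m) < w (d+1+m+1) := hasc (d+1+m) (by omega) (by omega)
      rw [show d+1+(m+1) = d+1+m+1 by omega]
      by_contra hne
      have hge : c + m + 2 ≤ w (d+1+m+1) := by omega
      have hvlt : c + m + 1 < n := by have := wlt (d+1+m+1) (by omega); omega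
      obtain ⟨p, hpn, hpv⟩ := wsur (c+m+1) hvlt
      have hpd : p ≤ d := by
        by_contra hpd
        push_neg at hpd
        rcases lt_trichotomy p (d+1+m+1) with h|h|h
        · rcases eq_or_lt_of_le (show p ≤ d+1+m by omega) with he|hl
          · rw [he] at hpv; omega
          · have := mono2 p (d+1+m) (by omega) hl (by omega); omega
        · rw [h] at hpv; omega
        · have := mono2 (d+1+m+1) p (by omega) h hpn; omega
      exact P213 p (d+1) (d+1+m+1) (by omega) (by omega) (by omega) (by omega) (by omega)
  have hMn : c + (n - (d+2)) = w (n-1) := by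
    have h := hBm (n - (d+2)) (by omega)
    rw [show d+1+(n-(d+2)) = n-1 by omega] at h
    omega
  have hM : c + (n - (d+2)) ≤ n - 1 := by have := wlt (n-1) (by omega); omega
  have hcd1 : c ≤ d + 1 := by omega
  have chain_ge : ∀ p, p ≤ d → p ≤ w p := by
    intro p
    induction p with
    | zero => intro _; omega
    | succ m ih =>
      intro h
      have h1 := mono1 m (m+1) (by omega) h
      have h2 := ih (by omega)
      omega
  have chain_le : ∀ p, p ≤ d → w p + (d - p) ≤ w d := by
    have main : ∀ t, ∀ p, p + t ≤ d → w p + t ≤ w (p+t) := by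
      intro t
      induction t with
      | zero => intro p _; simp
      | succ m ih =>
        intro p h
        have h1 := ih p (by omega)
        have h2 := mono1 (p+m) (p+m+1) (by omega) (by omega)
        rw [show p+(m+1) = p+m+1 by omega]
        omega
    intro p hp
    have := main (d - p) p (by omega)
    rw [show p + (d-p) = d by omega] at this
    omega
  have hlow : ∀ p, p ≤ d → w p < c → w p = p := by
    intro p hp hwp
    have h1 : p ≤ w p := chain_ge p hp
    have hsub : ∀ v, v ≤ w p → pos v ≤ p := by
      intro v hv
      have hvn : v < n := by have := wlt p (by omega); omega
      obtain ⟨h4, h5⟩ := hpos v hvn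
      by_contra hqp
      push_neg at hqp
      rcases le_or_gt (pos v) d with h|h
      · have := mono1 p (pos v) hqp h; omega
      · have h6 := hBm (pos v - (d+1)) (by omega)
        rw [show d+1+(pos v-(d+1)) = pos v by omega] at h6
        omega
    have hcard : w p + 1 ≤ p + 1 := by
      have hcl : (Finset.range (w p + 1)).card ≤ (Finset.range (p+1)).card := by
        apply Finset.card_le_card_of_injOn pos
        · intro v hv
          simp only [Finset.mem_coe, Finset.mem_range] at hv ⊢
          have := hsub v (by omega)
          omega
        · intro a ha b hb hab
          simp only [Finset.mem_range, Finset.coe_range, Set.mem_Iio] at ha hb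
          have hwa : w p < n := wlt p (by omega)
          have h6 := (hpos a (by omega)).2
          have h7 := (hpos b (by omega)).2
          rw [hab] at h6
          omega
      simpa using hcl
    omega
  have hhigh : ∀ p, p ≤ d → c + (n - (d+2)) < w p → w p = p + (n - (d+1)) := by
    intro p hp hwp
    have h2 : w p + (d - p) ≤ w d := chain_le p hp
    have h3 : w d < n := wlt d (by omega)
    have hsub : ∀ v, w p ≤ v → v < n → p ≤ pos v ∧ pos v ≤ d := by
      intro v hv hvn
      obtain ⟨h4, h5⟩ := hpos v hvn
      constructor
      · by_contra hq
        push_neg at hq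
        have := mono1 (pos v) p hq hp
        omega
      · by_contra hq
        push_neg at hq
        have h6 := hBm (pos v - (d+1)) (by omega)
        rw [show d+1+(pos v-(d+1)) = pos v by omega] at h6
        omega
    have hcard : n - w p ≤ d + 1 - p := by
      have hcl : (Finset.Icc (w p) (n-1)).card ≤ (Finset.Icc p d).card := by
        apply Finset.card_le_card_of_injOn pos
        · intro v hv
          simp only [Finset.mem_coe, Finset.mem_Icc] at hv ⊢
          exact hsub v hv.1 (by omega)
        · intro a ha b hb hab
          simp only [Finset.mem_Icc, Finset.coe_Icc, Set.mem_Icc] at ha hb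
          have h6 := (hpos a (by omega)).2
          have h7 := (hpos b (by omega)).2
          rw [hab] at h6
          omega
      rw [Nat.card_Icc, Nat.card_Icc] at hcl
      omega
    omega
  have hdich : ∀ p, p ≤ d → w p < c ∨ c + (n - (d+2)) < w p := by
    intro p hp
    by_contra hcon'
    push_neg at hcon'
    obtain ⟨ha, hb⟩ := hcon'
    have h5 := hBm (w p - c) (by omega)
    have heq : w p = w (d+1+(w p - c)) := by omega
    have := winj p (d+1+(w p - c)) (by omega) (by omega) heq
    omega
  have hcd : c ≤ d := by
    by_contra h
    rcases hdich d le_rfl with h'|h'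
    · omega
    · have := wlt d (by omega); omega
  refine ⟨c, d+1, by omega, hdn, ?_⟩
  have hform : ∀ i, i < n → w i = rf n c (d+1) i := by
    intro i hin
    rcases lt_or_ge i c with h|h
    · rw [rf_low h]
      have hp : i ≤ d := by omega
      rcases hdich i hp with h'|h'
      · exact hlow i hp h'
      · have := hhigh i hp h'; omega
    · rcases le_or_gt i d with h2|h2
      · rw [rf_mid h (by omega)]
        rcases hdich i h2 with h'|h'
        · have := hlow i h2 h'; omega
        · have := hhigh i h2 h'; omega
      · rw [rf_high (by omega)]
        have h5 := hBm (i - (d+1)) (by omega)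
        rw [show d+1+(i-(d+1)) = i by omega] at h5
        omega
  apply Equiv.ext
  intro i
  apply Fin.ext
  rw [rho_apply (show c < d+1 by omega) hdn]
  have h9 := hform i.val i.isLt
  rw [wval i.val i.isLt] at h9
  simpa using h9

noncomputable def gmap (n : ℕ) : (Σ _ : ℕ, ℕ) → Equiv.Perm (Fin n) := fun p => rho n p.2 p.1

def idxSet (n : ℕ) : Finset (Σ _ : ℕ, ℕ) := (Finset.Ico 1 n).sigma (fun k => Finset.range k)

lemma filter_eq (n : ℕ) :
    (Finset.univ.filter (fun σ : Equiv.Perm (Fin n) => permAvoids σ p213 ∧ permAvoids σ p321))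
      = insert 1 ((idxSet n).image (gmap n)) := by
  ext σ
  simp only [Finset.mem_filter, Finset.mem_univ, true_and, Finset.mem_insert, Finset.mem_image,
    idxSet, Finset.mem_sigma, Finset.mem_Ico, Finset.mem_range, gmap]
  constructor
  · rintro ⟨h1, h2⟩
    rcases classify σ h1 h2 with h | ⟨c, k, hck, hkn, rfl⟩
    · left; exact h
    · right
      exact ⟨⟨k, c⟩, ⟨⟨Nat.lt_of_le_of_lt (Nat.zero_le c) hck, hkn⟩, hck⟩, rfl⟩
  · rintro (rfl | ⟨⟨k, c⟩, ⟨⟨hk1, hkn⟩, hck⟩, rfl⟩)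
    · exact ⟨id_avoids213, id_avoids321⟩
    · exact ⟨rho_avoids213 hck hkn, rho_avoids321 hck hkn⟩

lemma one_not_mem (n : ℕ) : (1 : Equiv.Perm (Fin n)) ∉ (idxSet n).image (gmap n) := by
  rw [Finset.mem_image]
  rintro ⟨⟨k, c⟩, hmem, heq⟩
  simp only [idxSet, Finset.mem_sigma, Finset.mem_Ico, Finset.mem_range] at hmem
  exact rho_ne_one hmem.2 hmem.1.2 heq

lemma gmap_injOn (n : ℕ) : Set.InjOn (gmap n) (idxSet n) := by
  rintro ⟨k, c⟩ h1 ⟨k', c'⟩ h2 heq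
  simp only [idxSet, Finset.coe_sigma, Set.mem_sigma_iff, Finset.coe_Ico, Finset.coe_range,
    Set.mem_Ico, Set.mem_Iio] at h1 h2
  obtain ⟨⟨_, hkn⟩, hck⟩ := h1
  obtain ⟨⟨_, hkn'⟩, hck'⟩ := h2
  simp only [gmap] at heq
  have hkk : k = k' := by
    have h3 := rho_desSet hck hkn
    have h4 := rho_desSet hck' hkn'
    rw [heq, h4] at h3
    simpa using h3.symm
  subst hkk
  have e1 : ((rho n c k) ⟨k, hkn⟩ : ℕ) = c := by
    rw [rho_apply hck hkn, rf_high (le_refl k)]; omega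
  have e2 : ((rho n c' k) ⟨k, hkn⟩ : ℕ) = c' := by
    rw [rho_apply hck' hkn, rf_high (le_refl k)]; omega
  have : c = c' := by rw [← e1, ← e2, heq]
  simp [this]

lemma sum_Ico_id (n : ℕ) : ∑ k ∈ Finset.Ico 1 n, k = n.choose 2 := by
  rcases n with _ | m
  · simp
  have h0 : Finset.range (m+1) = insert 0 (Finset.Ico 1 (m+1)) := by
    ext x
    simp only [Finset.mem_range, Finset.mem_insert, Finset.mem_Ico]
    rcases Nat.eq_zero_or_pos x with rfl | hx
    · simpa using Nat.succ_pos m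
    · constructor
      · intro h; exact Or.inr ⟨hx, h⟩
      · rintro (rfl | ⟨_, h⟩)
        · exact Nat.succ_pos m
        · exact h
  have h1 : ∑ k ∈ Finset.range (m+1), k = ∑ k ∈ Finset.Ico 1 (m+1), k := by
    rw [h0, Finset.sum_insert (by simp), zero_add]
  rw [← h1, Finset.sum_range_id, Nat.choose_two_right]


theorem maj_des_213_321 (n : ℕ) (hn : 1 ≤ n) :
    (∀ q t : ℚ,
      ∑ σ ∈ Finset.univ.filter
          (fun σ : Equiv.Perm (Fin n) => permAvoids σ p213 ∧ permAvoids σ p321),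
        q ^ majIdx σ * t ^ desNum σ
        = 1 + t * ∑ k ∈ Finset.Icc 1 (n - 1), (k : ℚ) * q ^ k) ∧
    (Finset.univ.filter
        (fun σ : Equiv.Perm (Fin n) => permAvoids σ p213 ∧ permAvoids σ p321)).card
      = 1 + n.choose 2 := by
  have hIco : Finset.Icc 1 (n - 1) = Finset.Ico 1 n := by
    rw [← Finset.Ico_add_one_right_eq_Icc, Nat.sub_add_cancel hn]
  constructor
  · intro q t
    rw [filter_eq, Finset.sum_insert (one_not_mem n),
      Finset.sum_image (fun a ha b hb => gmap_injOn n ha hb)]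
    have hid : majIdx (1 : Equiv.Perm (Fin n)) = 0 ∧ desNum (1 : Equiv.Perm (Fin n)) = 0 := by
      constructor <;> simp [majIdx, desNum, desSet_one]
    rw [hid.1, hid.2]
    have hterm : ∀ p ∈ idxSet n,
        q ^ majIdx (gmap n p) * t ^ desNum (gmap n p) = q ^ p.1 * t := by
      rintro ⟨k, c⟩ hmem
      simp only [idxSet, Finset.mem_sigma, Finset.mem_Ico, Finset.mem_range] at hmem
      obtain ⟨⟨_, hkn⟩, hck⟩ := hmem
      simp only [gmap, majIdx, desNum, rho_desSet hck hkn, Finset.sum_singleton,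
        Finset.card_singleton, pow_one]
    rw [Finset.sum_congr rfl hterm]
    rw [idxSet, Finset.sum_sigma]
    simp only [Finset.sum_const, Finset.card_range, nsmul_eq_mul]
    rw [hIco, Finset.mul_sum]
    simp only [pow_zero, mul_one]
    congr 1
    apply Finset.sum_congr rfl
    intro k _
    ring
  · rw [filter_eq, Finset.card_insert_of_notMem (one_not_mem n),
      Finset.card_image_of_injOn (gmap_injOn n), idxSet, Finset.card_sigma]
    simp only [Finset.card_range]
    rw [sum_Ico_id]
    omega
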